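/- arXiv:math/0510274 — 2 statements merged into one kernel-verified Lean document; each statement's English description precedes it below -/
import Mathlib

section
/- Let (R,m) be a commutative Noetherian local ring, let a be an ideal of R with dim R/a = 1, and let M and N be finitely generated R-modules. Then the set Ass_R(H_a^t(M,N)) is finite for every integer t ≥ 0. -/
/-!
Generalized local cohomology `H_a^i(M, N) = colim_n Ext_R^i(M ⧸ a^n M, N)`,
following the design of `Mathlib.Algebra.Homology.LocalCohomology`.
-/

open CategoryTheory CategoryTheory.Limits Opposite

noncomputable section

universe u

variable {R : Type u} [CommRing R]

/-- The directed system of quotients of `M` by a decreasing family of submodules,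
indexed by `ℕᵒᵖ`. -/
def quotDiagram (M : ModuleCat.{u} R) (p : ℕ → Submodule R M)
    (hp : ∀ a b : ℕ, a ≤ b → p b ≤ p a) : ℕᵒᵖ ⥤ ModuleCat.{u} R where
  obj t := ModuleCat.of R (M ⧸ p (unop t))
  map w := ModuleCat.ofHom (Submodule.mapQ _ _ LinearMap.id (hp _ _ w.unop.down.down))
  map_id _ := by apply ModuleCat.hom_ext; apply Submodule.linearMap_qext; rfl
  map_comp _ _ := by apply ModuleCat.hom_ext; apply Submodule.linearMap_qext; rfl

/-- The directed system of quotients `M ⧸ J^n • M`, indexed by `ℕᵒᵖ`. -/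
def quotIdealPowerSMulDiagram (J : Ideal R) (M : ModuleCat.{u} R) : ℕᵒᵖ ⥤ ModuleCat.{u} R :=
  quotDiagram M (fun n => J ^ n • ⊤)
    (fun _ _ h => Submodule.smul_mono_left (Ideal.pow_le_pow_right h))

/-- The diagram `n ↦ Ext^i (M ⧸ J^n • M) N` whose colimit is the `i`-th generalized
local cohomology of `(M, N)` with respect to `J`. -/
def generalizedLocalCohomology.diagram (J : Ideal R) (i : ℕ) (M N : ModuleCat.{u} R) :
    ℕᵒᵖᵒᵖ ⥤ ModuleCat.{u} R :=
  (quotIdealPowerSMulDiagram J M).op ⋙ (Ext R (ModuleCat.{u} R) i).flip.obj N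

instance (J : Ideal R) (i : ℕ) (M N : ModuleCat.{u} R) :
    HasColimit (generalizedLocalCohomology.diagram J i M N) := by
  have : HasColimitsOfShape ℕᵒᵖᵒᵖ (AddCommGrpMax.{u, 0}) := inferInstance
  infer_instance

/-- The `i`-th generalized local cohomology module `H_J^i(M, N)`, defined as the direct
limit of `Ext^i(M ⧸ J^n • M, N)` over the powers `J^n` of `J`. -/
def generalizedLocalCohomology (J : Ideal R) (i : ℕ) (M N : ModuleCat.{u} R) :
    ModuleCat.{u} R :=
  colimit (generalizedLocalCohomology.diagram J i M N)

/-! ### Auxiliary material: linear structure on opposite categories -/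

section OpLinear
variable {S : Type*} [Semiring S] {C : Type*} [Category C] [Preadditive C] [Linear S C]

instance opHomSMul (X Y : Cᵒᵖ) : SMul S (X ⟶ Y) := ⟨fun r f => (r • f.unop).op⟩

@[simp] lemma unop_smul' {X Y : Cᵒᵖ} (r : S) (f : X ⟶ Y) : (r • f).unop = r • f.unop := rfl
@[simp] lemma op_smul' {X Y : C} (r : S) (f : X ⟶ Y) : (r • f).op = r • f.op := rfl

instance opHomModule (X Y : Cᵒᵖ) : Module S (X ⟶ Y) where
  one_smul f := Quiver.Hom.unop_inj (one_smul _ _)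
  mul_smul r s f := Quiver.Hom.unop_inj (mul_smul _ _ _)
  smul_zero r := Quiver.Hom.unop_inj (by simp)
  smul_add r f g := Quiver.Hom.unop_inj (by simp)
  add_smul r s f := Quiver.Hom.unop_inj (by simp [add_smul])
  zero_smul f := Quiver.Hom.unop_inj (by simp)

instance opLinear : Linear S Cᵒᵖ where
  smul_comp X Y Z r f g := Quiver.Hom.unop_inj (by simp [Linear.comp_smul])
  comp_smul X Y Z f r g := Quiver.Hom.unop_inj (by simp [Linear.smul_comp])

end OpLinear

section HMS
variable {S : Type*} [Semiring S] {C : Type*} [Category C] [Preadditive C] [Linear S C]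
  {ι : Type*} {c : ComplexShape ι} {K L : HomologicalComplex C c}

lemma homologyMap_smul' (f : K ⟶ L) (r : S) (i : ι) [K.HasHomology i] [L.HasHomology i] :
    HomologicalComplex.homologyMap (r • f) i = r • HomologicalComplex.homologyMap f i := by
  have h : (HomologicalComplex.shortComplexFunctor C c i).map (r • f)
      = r • (HomologicalComplex.shortComplexFunctor C c i).map f := by
    ext <;> rfl
  rw [HomologicalComplex.homologyMap, HomologicalComplex.homologyMap, h,
    ShortComplex.homologyMap_smul]
  rfl

end HMS

/-- If `r : R` annihilates the module `A`, then `r` annihilates `Ext^t(A, N)`. -/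
lemma smul_ext_eq_zero {A N : ModuleCat.{u} R} (r : R)
    (hr : r • (𝟙 A) = 0) (t : ℕ) :
    r • (𝟙 (((Ext R (ModuleCat.{u} R) t).obj (op A)).obj N)) = 0 := by
  obtain ⟨P⟩ : Nonempty (ProjectiveResolution A) := HasProjectiveResolution.out
  let C := ModuleCat.{u} R
  let F : C ⥤ (ModuleCat.{u} R)ᵒᵖ := ((linearYoneda R C).obj N).rightOp
  have hsingle : (ChainComplex.single₀ C).map (r • 𝟙 A)
      = r • (ChainComplex.single₀ C).map (𝟙 A) := by
    apply HomologicalComplex.hom_ext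
    intro i
    obtain rfl | hi := eq_or_ne i 0
    · simp; rfl
    · apply (HomologicalComplex.isZero_single_obj_X (ComplexShape.down ℕ) 0 A i hi).eq_of_tgt
  have w1 : (0 : P.complex ⟶ P.complex) ≫ P.π
      = P.π ≫ (ChainComplex.single₀ C).map (r • 𝟙 A) := by
    rw [hr, Functor.map_zero, zero_comp, comp_zero]
  have w2 : (r • (𝟙 P.complex)) ≫ P.π
      = P.π ≫ (ChainComplex.single₀ C).map (r • 𝟙 A) := by
    rw [Linear.smul_comp, Category.id_comp, hsingle, Linear.comp_smul,
      CategoryTheory.Functor.map_id, Category.comp_id]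
  have e1 := F.leftDerived_map_eq t (r • 𝟙 A) 0 w1
  have e2 := F.leftDerived_map_eq t (r • 𝟙 A) (r • 𝟙 P.complex) w2
  rw [e1] at e2
  have hcanc : ((F.mapHomologicalComplex _ ⋙ HomologicalComplex.homologyFunctor _ _ t).map
      (0 : P.complex ⟶ P.complex))
      = (F.mapHomologicalComplex _ ⋙ HomologicalComplex.homologyFunctor _ _ t).map
        (r • 𝟙 P.complex) := by
    have := e2
    rwa [cancel_epi, cancel_mono] at this
  have hψ : (F.mapHomologicalComplex _).map (r • 𝟙 P.complex)
      = r • 𝟙 ((F.mapHomologicalComplex _).obj P.complex) := by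
    ext i
    apply Quiver.Hom.unop_inj
    apply ModuleCat.hom_ext
    apply LinearMap.ext
    intro h
    simp only [F, Functor.rightOp_map, Functor.mapHomologicalComplex_map_f,
      HomologicalComplex.smul_f_apply, HomologicalComplex.id_f, Quiver.Hom.unop_op,
      linearYoneda_obj_map, ModuleCat.ofHom, unop_smul']
    show (Linear.leftComp R N (r • 𝟙 (P.complex.X i))) (show P.complex.X i ⟶ N from h) = _
    rw [Linear.leftComp_apply, Linear.smul_comp, Category.id_comp]
    rfl
  have hz : r • 𝟙 (((F.mapHomologicalComplex _ ⋙
      HomologicalComplex.homologyFunctor _ _ t)).obj P.complex) = 0 := by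
    have : ((F.mapHomologicalComplex _ ⋙ HomologicalComplex.homologyFunctor _ _ t).map
        (r • 𝟙 P.complex)) = r • 𝟙 _ := by
      simp only [Functor.comp_map, hψ]
      show HomologicalComplex.homologyMap _ t = _
      rw [homologyMap_smul', HomologicalComplex.homologyMap_id]
      rfl
    rw [← this, ← hcanc, Functor.map_zero]
  let e : (((Ext R (ModuleCat.{u} R) t).obj (op A)).obj N) ≅
      unop (((F.mapHomologicalComplex _ ⋙
        HomologicalComplex.homologyFunctor _ _ t)).obj P.complex) :=
    (P.isoLeftDerivedObj F t).unop.symm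
  have hu : r • 𝟙 (unop (((F.mapHomologicalComplex _ ⋙
      HomologicalComplex.homologyFunctor _ _ t)).obj P.complex)) = 0 := by
    have := congrArg Quiver.Hom.unop hz
    simpa using this
  calc r • (𝟙 (((Ext R (ModuleCat.{u} R) t).obj (op A)).obj N))
      = r • (e.hom ≫ e.inv) := by rw [e.hom_inv_id]
    _ = e.hom ≫ (r • 𝟙 _) ≫ e.inv := by
        rw [Linear.smul_comp, Category.id_comp, Linear.comp_smul]
    _ = 0 := by rw [hu, zero_comp, comp_zero]

/-- If `dim R/a = 1` and `R` is Noetherian local, the set of primes containing `a` is finite. -/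
lemma finite_primes_containing [IsNoetherianRing R] [IsLocalRing R] (a : Ideal R)
    (hdim : ringKrullDim (R ⧸ a) = 1) :
    {p : Ideal R | p.IsPrime ∧ a ≤ p}.Finite := by
  have hfin : a.minimalPrimes.Finite := by
    rw [Ideal.minimalPrimes_eq_comap]
    exact ((minimalPrimes.finite_of_isNoetherianRing (R ⧸ a))).image _
  refine (hfin.insert (IsLocalRing.maximalIdeal R)).subset ?_
  rintro p ⟨hp, hap⟩
  obtain ⟨q, hq, hqp⟩ := Ideal.exists_minimalPrimes_le hap
  by_cases hpm : p = IsLocalRing.maximalIdeal R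
  · exact Set.mem_insert_iff.2 (Or.inl hpm)
  · refine Set.mem_insert_iff.2 (Or.inr ?_)
    by_contra hpq
    have hqlt : q < p := lt_of_le_of_ne hqp (fun h => hpq (h ▸ hq))
    have hplt : p < IsLocalRing.maximalIdeal R :=
      lt_of_le_of_ne (IsLocalRing.le_maximalIdeal hp.ne_top) hpm
    have hq' : q.IsPrime := hq.1.1
    have haq : a ≤ q := hq.1.2
    have ham : a ≤ IsLocalRing.maximalIdeal R := hap.trans hplt.le
    have hm : (IsLocalRing.maximalIdeal R).IsPrime := inferInstance
    let f := Ideal.Quotient.mk a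
    have hsurj : Function.Surjective f := Ideal.Quotient.mk_surjective
    have hker : RingHom.ker f = a := Ideal.mk_ker
    have hmap : ∀ (I : Ideal R), a ≤ I → (I.map f).comap f = I := by
      intro I hI
      rw [Ideal.comap_map_of_surjective f hsurj, ← RingHom.ker_eq_comap_bot, hker,
        sup_eq_left.2 hI]
    have prime : ∀ (I : Ideal R), I.IsPrime → a ≤ I → (I.map f).IsPrime := by
      intro I hI haI
      have : RingHom.ker f ≤ I := le_trans (le_of_eq hker) haI
      exact Ideal.map_isPrime_of_surjective hsurj this
    have lt1 : q.map f < p.map f := by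
      refine lt_of_le_of_ne (Ideal.map_mono hqlt.le) (fun h => hqlt.ne ?_)
      rw [← hmap q haq, h, hmap p hap]
    have lt2 : p.map f < (IsLocalRing.maximalIdeal R).map f := by
      refine lt_of_le_of_ne (Ideal.map_mono hplt.le) (fun h => hplt.ne ?_)
      rw [← hmap p hap, h, hmap _ ham]
    let P₀ : PrimeSpectrum (R ⧸ a) := ⟨q.map f, prime q hq' haq⟩
    let P₁ : PrimeSpectrum (R ⧸ a) := ⟨p.map f, prime p hp hap⟩
    let P₂ : PrimeSpectrum (R ⧸ a) := ⟨(IsLocalRing.maximalIdeal R).map f, prime _ hm ham⟩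
    let c : LTSeries (PrimeSpectrum (R ⧸ a)) :=
      (RelSeries.singleton _ P₀).snoc P₁ lt1 |>.snoc P₂ (by exact lt2)
    have := Order.LTSeries.length_le_krullDim c
    rw [show ringKrullDim (R ⧸ a) = Order.krullDim (PrimeSpectrum (R ⧸ a)) from rfl] at hdim
    rw [hdim] at this
    rw [show c.length = 2 from rfl] at this; norm_num at this

theorem ass_generalizedLocalCohomology_finite_of_dim_quotient_eq_one
    [IsNoetherianRing R] [IsLocalRing R] (a : Ideal R)
    (hdim : ringKrullDim (R ⧸ a) = 1)
    (M N : ModuleCat.{u} R) [Module.Finite R M] [Module.Finite R N] (t : ℕ) :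
    (associatedPrimes R (generalizedLocalCohomology a t M N)).Finite := by
  refine (finite_primes_containing a hdim).subset ?_
  rintro p ⟨hprime, x, rfl⟩
  refine ⟨hprime, ?_⟩
  haveI : PreservesColimitsOfShape ℕᵒᵖᵒᵖ (forget (ModuleCat.{u} R)) := by
    let e := ULiftHomULiftCategory.equiv.{u, u} ℕᵒᵖᵒᵖ
    haveI : IsFiltered (ULiftHom.{u} (ULift.{u} ℕᵒᵖᵒᵖ)) := IsFiltered.of_equivalence e
    exact preservesColimitsOfShape_of_equiv e.symm _
  obtain ⟨j, y, hy⟩ :=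
    Concrete.colimit_exists_rep (generalizedLocalCohomology.diagram a t M N) x
  set n : ℕ := unop (unop j) with hn
  have hA : ∀ r ∈ a ^ n, r • 𝟙 ((quotIdealPowerSMulDiagram a M).obj (unop j)) = 0 := by
    intro r hr
    apply ModuleCat.hom_ext
    apply LinearMap.ext
    intro z
    obtain ⟨m, rfl⟩ := Submodule.Quotient.mk_surjective _ z
    show r • Submodule.Quotient.mk m = (0 : M ⧸ (a ^ n • ⊤ : Submodule R M))
    rw [← Submodule.Quotient.mk_smul, Submodule.Quotient.mk_eq_zero]
    exact Submodule.smul_mem_smul hr Submodule.mem_top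
  have hx : ∀ r ∈ a ^ n, r • x = 0 := by
    intro r hr
    have h0 : r • y = 0 := by
      have h := smul_ext_eq_zero (N := N) r (hA r hr) t
      change (r • 𝟙 (((Ext R (ModuleCat.{u} R) t).obj
            (op ((quotIdealPowerSMulDiagram a M).obj (unop j)))).obj N)).hom y = 0
      rw [h]
      rfl
    rw [← hy]
    calc r • (colimit.ι (generalizedLocalCohomology.diagram a t M N) j) y
        = (colimit.ι (generalizedLocalCohomology.diagram a t M N) j) (r • y) :=
          (map_smul _ r y).symm
      _ = 0 := by rw [h0, map_zero]
  have hpow : a ^ n ≤ (Submodule.span R {x}).annihilator := by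
    intro r hr
    rw [Submodule.mem_annihilator]
    intro m hm
    obtain ⟨c, rfl⟩ := Submodule.mem_span_singleton.1 hm
    rw [smul_comm, hx r hr, smul_zero]
  exact hprime.le_of_pow_le (hpow.trans (le_trans (fun r hr => Submodule.mem_colon_singleton.2
    (by rw [Submodule.mem_bot]; exact (Submodule.mem_annihilator_span_singleton _ _).1 hr))
    Ideal.le_radical))

end
end

section
/- Let R be a commutative Noetherian ring with identity, let a be an ideal of R, let N be a finitely generated R-module, and let x_1, ..., x_n be an a-filter regular sequence on N. Then there exists an element y ∈ a such that x_1, ..., x_n, y is an a-filter regular sequence on N. -/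
open CategoryTheory CategoryTheory.Limits Opposite

noncomputable section

universe u

variable {R : Type u} [CommRing R]

/-- `x 0, ..., x (n-1)` is an `a`-filter regular sequence on `N`: each `x i` lies in `a`,
and the support of `((x 0, ..., x (i-1)) N :_N x i) ⧸ (x 0, ..., x (i-1)) N` is contained
in `V(a)`, the set of primes containing `a`. -/
def IsFilterRegularSequence (a : Ideal R) (N : Type u) [AddCommGroup N] [Module R N]
    {n : ℕ} (x : Fin n → R) : Prop :=
  (∀ i, x i ∈ a) ∧
  ∀ i : Fin n,
    Module.support R
      ↥((Submodule.comap (LinearMap.lsmul R N (x i))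
            (Ideal.span (x '' {j | j < i}) • (⊤ : Submodule R N))).map
          (Ideal.span (x '' {j | j < i}) • (⊤ : Submodule R N)).mkQ)
      ⊆ PrimeSpectrum.zeroLocus (a : Set R)

section AssFinite
variable {M : Type*} [AddCommGroup M] [Module R M]

lemma assPrimes_subset_union [IsNoetherianRing R] (K : Submodule R M) :
    associatedPrimes R M ⊆ associatedPrimes R K ∪ associatedPrimes R (M ⧸ K) := by
  intro p hp0
  simp only [AssociatedPrimes.mem_iff, isAssociatedPrime_iff, Submodule.bot_colon'] at hp0
  obtain ⟨hp, m, rfl⟩ := hp0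
  simp only [Set.mem_union, AssociatedPrimes.mem_iff, isAssociatedPrime_iff, Submodule.bot_colon']
  by_cases h : (Submodule.span R {K.mkQ m}).annihilator ≤ (Submodule.span R {m}).annihilator
  · right
    refine ⟨hp, K.mkQ m, le_antisymm (fun r hr => ?_) h⟩
    rw [Submodule.mem_annihilator_span_singleton] at hr ⊢
    rw [← map_smul, hr, map_zero]
  · left
    rw [SetLike.not_le_iff_exists] at h
    obtain ⟨r, hr1, hr2⟩ := h
    rw [Submodule.mem_annihilator_span_singleton] at hr1
    have hrm : ¬ r • m = 0 := fun e =>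
      hr2 ((Submodule.mem_annihilator_span_singleton _ _).mpr e)
    have hrK : r • m ∈ K := by
      have h0 : K.mkQ (r • m) = 0 := by rw [map_smul, hr1]
      rwa [Submodule.mkQ_apply, Submodule.Quotient.mk_eq_zero] at h0
    refine ⟨hp, ⟨r • m, hrK⟩, ?_⟩
    ext s
    have hcoe : (s • (⟨r • m, hrK⟩ : K) = 0) ↔ s • (r • m) = 0 := by
      rw [Subtype.ext_iff]; rfl
    rw [Submodule.mem_annihilator_span_singleton, Submodule.mem_annihilator_span_singleton, hcoe]
    constructor
    · intro hs
      rw [smul_comm, hs, smul_zero]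
    · intro hs
      have : (s * r) • m = 0 := by rwa [mul_smul]
      have hsr : s * r ∈ (Submodule.span R {m}).annihilator :=
        (Submodule.mem_annihilator_span_singleton _ _).mpr this
      rcases hp.mem_or_mem hsr with h' | h'
      · exact (Submodule.mem_annihilator_span_singleton _ _).mp h'
      · exact absurd ((Submodule.mem_annihilator_span_singleton _ _).mp h') hrm

lemma associatedPrimes_finite [IsNoetherianRing R] (M : Type*) [AddCommGroup M] [Module R M]
    [Module.Finite R M] : (associatedPrimes R M).Finite := by
  have hN : IsNoetherian R M := isNoetherian_of_isNoetherianRing_of_finite R M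
  have main : ∀ K : Submodule R M, (associatedPrimes R (M ⧸ K)).Finite := by
    intro K
    refine IsNoetherian.induction (P := fun K => (associatedPrimes R (M ⧸ K)).Finite)
      (fun L ih => ?_) K
    show (associatedPrimes R (M ⧸ L)).Finite
    by_cases hE : associatedPrimes R (M ⧸ L) = ∅
    · rw [hE]; exact Set.finite_empty
    obtain ⟨p, hp⟩ := Set.nonempty_iff_ne_empty.mpr hE
    simp only [AssociatedPrimes.mem_iff, isAssociatedPrime_iff, Submodule.bot_colon'] at hp
    obtain ⟨hp1, mb, hmb⟩ := hp
    have hmb0 : mb ≠ 0 := by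
      rintro rfl
      apply hp1.ne_top
      rw [hmb, Submodule.span_zero_singleton, Submodule.annihilator_bot]
    set K' := (Submodule.span R {mb}).comap L.mkQ with hK'def
    have hLK' : L ≤ K' := by
      intro z hz
      have : L.mkQ z = 0 := by
        rw [Submodule.mkQ_apply, Submodule.Quotient.mk_eq_zero]; exact hz
      simp only [hK'def, Submodule.mem_comap, this]
      exact Submodule.zero_mem _
    have hlt : L < K' := by
      obtain ⟨m, hm⟩ := L.mkQ_surjective mb
      refine lt_of_le_of_ne hLK' (fun hEq => hmb0 ?_)
      have hmK' : m ∈ K' := by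
        simp only [hK'def, Submodule.mem_comap, hm]
        exact Submodule.mem_span_singleton_self mb
      rw [← hEq] at hmK'
      rw [← hm, Submodule.mkQ_apply, Submodule.Quotient.mk_eq_zero]
      exact hmK'
    -- Ass of the span of mb
    have hker : LinearMap.ker (LinearMap.toSpanSingleton R (M ⧸ L) mb)
        = (Submodule.span R {mb}).annihilator := by
      ext r
      rw [LinearMap.mem_ker, Submodule.mem_annihilator_span_singleton,
        LinearMap.toSpanSingleton_apply]
    have e1 : (R ⧸ (Submodule.span R {mb}).annihilator) ≃ₗ[R] (Submodule.span R {mb} : Submodule R (M ⧸ L)) :=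
      ((Submodule.quotEquivOfEq _ _ hker.symm).trans
        ((LinearMap.toSpanSingleton R (M ⧸ L) mb).quotKerEquivRange)).trans
        (LinearEquiv.ofEq _ _ (LinearMap.span_singleton_eq_range R (M ⧸ L) mb).symm)
    have hAssSpan : associatedPrimes R (Submodule.span R {mb} : Submodule R (M ⧸ L)) = {p} := by
      rw [← LinearEquiv.AssociatedPrimes.eq e1, ← hmb,
        associatedPrimes.eq_singleton_of_isPrimary hp1.isPrimary, hp1.radical]
    -- Ass of the quotient by the span
    have hmapeq : K'.map L.mkQ = Submodule.span R {mb} := by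
      rw [hK'def, Submodule.map_comap_eq, Submodule.range_mkQ, top_inf_eq]
    have e2 : ((M ⧸ L) ⧸ (Submodule.span R {mb} : Submodule R (M ⧸ L))) ≃ₗ[R] (M ⧸ K') :=
      hmapeq ▸ Submodule.quotientQuotientEquivQuotient L K' hLK'
    refine Set.Finite.subset (Set.Finite.union (Set.finite_singleton p) (ih K' hlt)) ?_
    refine (assPrimes_subset_union (Submodule.span R {mb})).trans ?_
    rw [hAssSpan, LinearEquiv.AssociatedPrimes.eq e2]
  have e := Submodule.quotEquivOfEqBot (⊥ : Submodule R M) rfl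
  rw [← LinearEquiv.AssociatedPrimes.eq e]
  exact main ⊥

end AssFinite

lemma exists_smul_regular [IsNoetherianRing R] (a : Ideal R) (M : Type*) [AddCommGroup M]
    [Module R M] [Module.Finite R M]
    (h : ∀ m : M, (∀ r ∈ a, r • m = 0) → m = 0) :
    ∃ y ∈ a, ∀ m : M, y • m = 0 → m = 0 := by
  classical
  have hfin := associatedPrimes_finite (R := R) M
  by_contra hcon
  push_neg at hcon
  have hsub : (a : Set R) ⊆ ⋃ p ∈ (↑hfin.toFinset : Set (Ideal R)), ((id p : Ideal R) : Set R) := by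
    intro y hy
    obtain ⟨m, hm1, hm2⟩ := hcon y hy
    have hz : y ∈ ⋃ p ∈ associatedPrimes R M, (p : Set R) := by
      rw [biUnion_associatedPrimes_eq_zero_divisors]
      exact ⟨m, hm2, hm1⟩
    obtain ⟨p, hp1, hp2⟩ := Set.mem_iUnion₂.mp hz
    exact Set.mem_biUnion (by simp [hp1]) hp2
  rw [Ideal.subset_union_prime ⊥ ⊥ (fun p hp _ _ => by
    have : p ∈ associatedPrimes R M := by simpa using hp
    exact this.isPrime)] at hsub
  obtain ⟨p, hps, hle⟩ := hsub
  have hp : p ∈ associatedPrimes R M := by simpa using hps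
  simp only [AssociatedPrimes.mem_iff, isAssociatedPrime_iff, Submodule.bot_colon'] at hp
  obtain ⟨hp1, m, hm⟩ := hp
  have hm0 : m = 0 := by
    refine h m (fun r hr => ?_)
    have : r ∈ (Submodule.span R {m}).annihilator := hm ▸ hle hr
    exact (Submodule.mem_annihilator_span_singleton _ _).mp this
  apply hp1.ne_top
  rw [hm, hm0, Submodule.span_zero_singleton, Submodule.annihilator_bot]

lemma key_lemma [IsNoetherianRing R] (a : Ideal R) (N : Type u) [AddCommGroup N] [Module R N]
    [Module.Finite R N] (W : Submodule R N) :
    ∃ y ∈ a, Module.support R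
      ↥((Submodule.comap (LinearMap.lsmul R N y) W).map W.mkQ)
      ⊆ PrimeSpectrum.zeroLocus (a : Set R) := by
  have hN : IsNoetherian R (N ⧸ W) :=
    isNoetherian_of_isNoetherianRing_of_finite R (N ⧸ W)
  set f : ℕ →o Submodule R (N ⧸ W) :=
    ⟨fun k => Submodule.torsionBySet R (N ⧸ W) ↑(a ^ k), fun k l hkl =>
      Submodule.torsionBySet_le_torsionBySet_of_subset (Ideal.pow_le_pow_right hkl)⟩ with hf
  obtain ⟨k0, hk0⟩ := monotone_stabilizes_iff_noetherian.mpr hN f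
  set Γ : Submodule R (N ⧸ W) := f (k0 + 1) with hΓ
  have hΓstep : ∀ m : N ⧸ W, (∀ r ∈ a, r • m ∈ Γ) → m ∈ Γ := by
    intro m hm
    have h2 : m ∈ f (k0 + 2) := by
      have hmul : a ^ (k0 + 1) * a ≤ (Submodule.span R {m}).annihilator := by
        refine Ideal.mul_le.mpr (fun s hs r hr => ?_)
        rw [Submodule.mem_annihilator_span_singleton, mul_smul]
        exact (Submodule.mem_torsionBySet_iff _ _).mp (hm r hr) ⟨s, hs⟩
      refine (Submodule.mem_torsionBySet_iff _ _).mpr (fun z => ?_)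
      have : (z : R) ∈ a ^ (k0 + 1) * a := by rw [← pow_succ]; exact z.2
      exact (Submodule.mem_annihilator_span_singleton _ _).mp (hmul this)
    rw [hΓ, ← hk0 (k0 + 1) (by omega), hk0 (k0 + 2) (by omega)]
    exact h2
  have hMb : ∀ mb : (N ⧸ W) ⧸ Γ, (∀ r ∈ a, r • mb = 0) → mb = 0 := by
    intro mb hmb
    obtain ⟨m, rfl⟩ := Γ.mkQ_surjective mb
    rw [Submodule.mkQ_apply, Submodule.Quotient.mk_eq_zero]
    refine hΓstep m (fun r hr => ?_)
    have := hmb r hr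
    rwa [Submodule.mkQ_apply, ← Submodule.Quotient.mk_smul, Submodule.Quotient.mk_eq_zero] at this
  obtain ⟨y, hy, hreg⟩ := exists_smul_regular a ((N ⧸ W) ⧸ Γ) hMb
  refine ⟨y, hy, ?_⟩
  have hTΓ : (Submodule.comap (LinearMap.lsmul R N y) W).map W.mkQ ≤ Γ := by
    rintro t ⟨nn, hnn, rfl⟩
    simp only [SetLike.mem_coe, Submodule.mem_comap, LinearMap.lsmul_apply] at hnn
    have h1 : y • (Γ.mkQ (W.mkQ nn)) = 0 := by
      rw [← map_smul, ← map_smul, Submodule.mkQ_apply W,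
        (Submodule.Quotient.mk_eq_zero W).mpr hnn, map_zero]
    have := hreg _ h1
    rwa [Submodule.mkQ_apply, Submodule.Quotient.mk_eq_zero] at this
  refine (Module.support_subset_of_injective (Submodule.inclusion hTΓ)
    (Submodule.inclusion_injective hTΓ)).trans ?_
  intro q hq
  obtain ⟨g, hg⟩ := Module.mem_support_iff_exists_annihilator.mp hq
  rw [PrimeSpectrum.mem_zeroLocus]
  intro r hr
  refine q.isPrime.mem_of_pow_mem (k0 + 1) (hg ?_)
  rw [Submodule.mem_annihilator_span_singleton]
  have hgt : (r ^ (k0 + 1)) • (g : N ⧸ W) = 0 :=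
    (Submodule.mem_torsionBySet_iff _ _).mp g.2 ⟨r ^ (k0 + 1), Ideal.pow_mem_pow hr (k0 + 1)⟩
  exact Subtype.ext (by rw [Submodule.coe_smul, hgt, Submodule.coe_zero])

theorem exists_extend_filterRegularSequence
    [IsNoetherianRing R] (a : Ideal R) (N : Type u) [AddCommGroup N] [Module R N]
    [Module.Finite R N] {n : ℕ} (x : Fin n → R)
    (hx : IsFilterRegularSequence a N x) :
    ∃ y ∈ a, IsFilterRegularSequence a N (Fin.snoc x y) := by
  obtain ⟨y, hy, hmain⟩ := key_lemma a N (Ideal.span (Set.range x) • ⊤)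
  refine ⟨y, hy, fun i => ?_, fun i => ?_⟩
  · induction i using Fin.lastCases with
    | last => simpa using hy
    | cast j => simpa using hx.1 j
  · induction i using Fin.lastCases with
    | last =>
      have h2 : (Fin.snoc x y : Fin (n + 1) → R) '' {j | j < Fin.last n} = Set.range x := by
        ext r
        simp only [Set.mem_image, Set.mem_setOf_eq, Set.mem_range]
        constructor
        · rintro ⟨k, hk, rfl⟩
          obtain ⟨k', rfl⟩ := Fin.exists_castSucc_eq.mpr (ne_of_lt hk)
          exact ⟨k', by simp⟩
        · rintro ⟨k, rfl⟩
          exact ⟨k.castSucc, Fin.castSucc_lt_last k, by simp⟩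
      have key : ∀ (c : R) (s : Set R), c = y → s = Set.range x →
          Module.support R
            ↥((Submodule.comap (LinearMap.lsmul R N c)
                  (Ideal.span s • (⊤ : Submodule R N))).map
                (Ideal.span s • (⊤ : Submodule R N)).mkQ)
            ⊆ PrimeSpectrum.zeroLocus (a : Set R) := by
        rintro c s rfl rfl; exact hmain
      exact key _ _ (by simp) h2
    | cast j =>
      have h2 : (Fin.snoc x y : Fin (n + 1) → R) '' {k | k < Fin.castSucc j}
          = x '' {k | k < j} := by
        ext r
        simp only [Set.mem_image, Set.mem_setOf_eq]
        constructor
        · rintro ⟨k, hk, rfl⟩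
          have hne : k ≠ Fin.last n := ne_of_lt (lt_of_lt_of_le hk (Fin.le_last _))
          obtain ⟨k', rfl⟩ := Fin.exists_castSucc_eq.mpr hne
          exact ⟨k', Fin.castSucc_lt_castSucc_iff.mp hk, by simp⟩
        · rintro ⟨k, hk, rfl⟩
          exact ⟨k.castSucc, Fin.castSucc_lt_castSucc_iff.mpr hk, by simp⟩
      have key : ∀ (c : R) (s : Set R), c = x j → s = x '' {k | k < j} →
          Module.support R
            ↥((Submodule.comap (LinearMap.lsmul R N c)
                  (Ideal.span s • (⊤ : Submodule R N))).map
                (Ideal.span s • (⊤ : Submodule R N)).mkQ)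
            ⊆ PrimeSpectrum.zeroLocus (a : Set R) := by
        rintro c s rfl rfl; exact hx.2 j
      exact key _ _ (by simp) h2

end
end
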